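/- arXiv:2106.05241 — 7 statements merged into one kernel-verified Lean document; each statement's English description precedes it below -/
import Mathlib

section
/- Under the stated setup, for every probability mass function q on C, the objective satisfies the identity F(q) = Σ_{c∈C} q c · (log(q c) − log(π c)) − log Z*, i.e. the expected KL divergence E_{z∼μ} KL[q ∥ p(·∣z)] equals KL[q ∥ π] − log Z*. -/
open MeasureTheory Real BigOperators

/-- Identity `F(q) = KL[q ‖ smx] − log Z*` for the single-facet VaDE objective. -/
theorem vade_objective_identity
    {Z : Type*} [MeasurableSpace Z] (μ : Measure Z) [IsProbabilityMeasure μ]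
    {C : Type*} [Fintype C] [Nonempty C]
    (p : Z → C → ℝ)
    (hpos : ∀ z c, 0 < p z c)
    (hsum : ∀ z, ∑ c, p z c = 1)
    (hmeas : ∀ c, Measurable fun z => Real.log (p z c))
    (hint : ∀ c, Integrable (fun z => Real.log (p z c)) μ)
    (Zstar : ℝ) (hZstar : Zstar = ∑ c, Real.exp (∫ z, Real.log (p z c) ∂μ))
    (smx : C → ℝ) (hsmx : ∀ c, smx c = Real.exp (∫ z, Real.log (p z c) ∂μ) / Zstar)
    (q : C → ℝ) (hq0 : ∀ c, 0 ≤ q c) (hq1 : ∑ c, q c = 1) :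
    ∫ z, ∑ c, q c * (Real.log (q c) - Real.log (p z c)) ∂μ
      = (∑ c, q c * (Real.log (q c) - Real.log (smx c))) - Real.log Zstar := by
  have hZpos : 0 < Zstar := by
    rw [hZstar]
    exact Finset.sum_pos (fun c _ => Real.exp_pos _) Finset.univ_nonempty
  have hlogsmx : ∀ c, Real.log (smx c) = (∫ z, Real.log (p z c) ∂μ) - Real.log Zstar := by
    intro c
    rw [hsmx c, Real.log_div (Real.exp_ne_zero _) (ne_of_gt hZpos), Real.log_exp]
  have hLHS : ∫ z, ∑ c, q c * (Real.log (q c) - Real.log (p z c)) ∂μ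
      = ∑ c, q c * (Real.log (q c) - ∫ z, Real.log (p z c) ∂μ) := by
    rw [integral_finset_sum]
    · congr 1
      ext c
      rw [show (fun z => q c * (Real.log (q c) - Real.log (p z c)))
          = fun z => q c * Real.log (q c) - q c * Real.log (p z c) by
            funext z; ring]
      rw [integral_sub (integrable_const _) ((hint c).const_mul _),
          integral_const, MeasureTheory.integral_const_mul]
      simp [mul_sub]
    · intro c _
      exact (((integrable_const (Real.log (q c))).sub (hint c)).const_mul _)
  rw [hLHS]
  have : ∑ c, q c * (Real.log (q c) - Real.log (smx c))
      = ∑ c, (q c * (Real.log (q c) - ∫ z, Real.log (p z c) ∂μ) + q c * Real.log Zstar) := by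
    congr 1; ext c; rw [hlogsmx c]; ring
  rw [this, Finset.sum_add_distrib, ← Finset.sum_mul, hq1]
  ring
end

section
/- (Single-Facet VaDE Trick.) Under the stated setup, π is a probability mass function on C, F(π) = −log Z*, and for every probability mass function q on C one has F(q) ≥ −log Z*, with equality if and only if q = π. In other words, π is the unique minimizer over pmfs q on C of the expected KL divergence E_{z∼μ} KL[q ∥ p(·∣z)], and the minimum value attained is −log Z*. -/
open MeasureTheory Real BigOperators

lemma gibbs_aux {C : Type*} [Fintype C] (pi q : C → ℝ)
    (hpi : ∀ c, 0 < pi c) (hpis : ∑ c, pi c = 1)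
    (hq : ∀ c, 0 ≤ q c) (hqs : ∑ c, q c = 1) :
    0 ≤ ∑ c, q c * (Real.log (q c) - Real.log (pi c)) ∧
    ((∑ c, q c * (Real.log (q c) - Real.log (pi c)) = 0) ↔ q = pi) := by
  have key : ∀ c, q c - pi c ≤ q c * (Real.log (q c) - Real.log (pi c)) := by
    intro c
    rcases eq_or_lt_of_le (hq c) with h | h
    · rw [← h]; simp; linarith [(hpi c).le]
    · have hx : 0 < pi c / q c := div_pos (hpi c) h
      have hl := Real.log_le_sub_one_of_pos hx
      rw [Real.log_div (hpi c).ne' h.ne'] at hl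
      have h2 : q c * (Real.log (pi c) - Real.log (q c)) ≤ q c * (pi c / q c - 1) :=
        mul_le_mul_of_nonneg_left hl h.le
      have h3 : q c * (pi c / q c - 1) = pi c - q c := by field_simp
      nlinarith
  have hsum : ∑ c, (q c - pi c) ≤ ∑ c, q c * (Real.log (q c) - Real.log (pi c)) :=
    Finset.sum_le_sum (fun c _ => key c)
  have hzero : ∑ c, (q c - pi c) = 0 := by
    rw [Finset.sum_sub_distrib, hqs, hpis]; ring
  constructor
  · linarith
  constructor
  · intro h0
    have hterm : ∀ c ∈ Finset.univ,
        q c * (Real.log (q c) - Real.log (pi c)) - (q c - pi c) = 0 := by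
      rw [← Finset.sum_eq_zero_iff_of_nonneg (fun c _ => by linarith [key c])]
      rw [Finset.sum_sub_distrib, hzero, h0]; ring
    funext c
    have hc := hterm c (Finset.mem_univ c)
    rcases eq_or_lt_of_le (hq c) with h | h
    · exfalso; rw [← h] at hc; simp at hc; linarith [hpi c]
    · by_contra hne
      have hx : 0 < pi c / q c := div_pos (hpi c) h
      have hx1 : pi c / q c ≠ 1 := by
        intro h1
        exact hne ((div_eq_one_iff_eq h.ne').mp h1).symm
      have hl := Real.log_lt_sub_one_of_pos hx hx1
      rw [Real.log_div (hpi c).ne' h.ne'] at hl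
      have h2 : q c * (Real.log (pi c) - Real.log (q c)) < q c * (pi c / q c - 1) :=
        (mul_lt_mul_iff_right₀ h).mpr hl
      have h3 : q c * (pi c / q c - 1) = pi c - q c := by field_simp
      nlinarith
  · intro h
    subst h
    simp

/-- Single-Facet VaDE Trick: `smx` is a pmf, `F(smx) = −log Z*`, and `smx` is the unique
minimizer of the expected KL divergence `F` over pmfs on `C`, with minimum `−log Z*`. -/
theorem single_facet_vade_trick
    {Z : Type*} [MeasurableSpace Z] (μ : Measure Z) [IsProbabilityMeasure μ]
    {C : Type*} [Fintype C] [Nonempty C]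
    (p : Z → C → ℝ)
    (hpos : ∀ z c, 0 < p z c)
    (hsum : ∀ z, ∑ c, p z c = 1)
    (hmeas : ∀ c, Measurable fun z => Real.log (p z c))
    (hint : ∀ c, Integrable (fun z => Real.log (p z c)) μ)
    (Zstar : ℝ) (hZstar : Zstar = ∑ c, Real.exp (∫ z, Real.log (p z c) ∂μ))
    (smx : C → ℝ) (hsmx : ∀ c, smx c = Real.exp (∫ z, Real.log (p z c) ∂μ) / Zstar) :
    ((∀ c, 0 ≤ smx c) ∧ ∑ c, smx c = 1)
    ∧ (∫ z, ∑ c, smx c * (Real.log (smx c) - Real.log (p z c)) ∂μ = - Real.log Zstar)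
    ∧ (∀ q : C → ℝ, (∀ c, 0 ≤ q c) → ∑ c, q c = 1 →
        (- Real.log Zstar ≤ ∫ z, ∑ c, q c * (Real.log (q c) - Real.log (p z c)) ∂μ)
        ∧ ((∫ z, ∑ c, q c * (Real.log (q c) - Real.log (p z c)) ∂μ = - Real.log Zstar)
            ↔ q = smx)) := by
  have hZpos : 0 < Zstar := by
    rw [hZstar]
    exact Finset.sum_pos (fun c _ => Real.exp_pos _) Finset.univ_nonempty
  have hsmxpos : ∀ c, 0 < smx c := fun c => by
    rw [hsmx]; exact div_pos (Real.exp_pos _) hZpos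
  have hsmxsum : ∑ c, smx c = 1 := by
    simp only [hsmx]
    rw [← Finset.sum_div, ← hZstar, div_self hZpos.ne']
  have hlogsmx : ∀ c, Real.log (smx c) = (∫ z, Real.log (p z c) ∂μ) - Real.log Zstar := by
    intro c
    rw [hsmx, Real.log_div (Real.exp_pos _).ne' hZpos.ne', Real.log_exp]
  -- integral computation
  have hF : ∀ q : C → ℝ,
      ∫ z, ∑ c, q c * (Real.log (q c) - Real.log (p z c)) ∂μ
        = ∑ c, q c * (Real.log (q c) - ∫ z, Real.log (p z c) ∂μ) := by
    intro q
    rw [integral_finset_sum]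
    · refine Finset.sum_congr rfl (fun c _ => ?_)
      rw [MeasureTheory.integral_const_mul, integral_sub (integrable_const _) (hint c), integral_const]
      simp
    · intro c _
      exact (((integrable_const _).sub (hint c)).const_mul _)
  -- G q rewritten with smx
  have hG : ∀ q : C → ℝ, (∑ c, q c = 1) →
      ∑ c, q c * (Real.log (q c) - ∫ z, Real.log (p z c) ∂μ)
        = (∑ c, q c * (Real.log (q c) - Real.log (smx c))) - Real.log Zstar := by
    intro q hq1
    have : ∀ c, q c * (Real.log (q c) - ∫ z, Real.log (p z c) ∂μ)
        = q c * (Real.log (q c) - Real.log (smx c)) - q c * Real.log Zstar := by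
      intro c; rw [hlogsmx c]; ring
    simp only [this, Finset.sum_sub_distrib, ← Finset.sum_mul, hq1, one_mul]
  have hFsmx : ∫ z, ∑ c, smx c * (Real.log (smx c) - Real.log (p z c)) ∂μ
      = - Real.log Zstar := by
    rw [hF, hG smx hsmxsum]
    simp
  refine ⟨⟨fun c => (hsmxpos c).le, hsmxsum⟩, hFsmx, ?_⟩
  intro q hq hq1
  obtain ⟨hge, hiff⟩ := gibbs_aux smx q hsmxpos hsmxsum hq hq1
  rw [hF, hG q hq1]
  constructor
  · linarith
  · constructor
    · intro h; exact hiff.mp (by linarith)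
    · intro h; subst h; simp [hiff.mpr rfl]
end

section
/- Under the stated setup, Z* ≤ 1; consequently the minimum value −log Z* of the objective F over probability mass functions on C is nonnegative. (This corrects the claim of VaDE that the expected KL term can in general be made equal to zero.) -/
open MeasureTheory Real BigOperators

/-- `Z* ≤ 1`, hence the minimum value `−log Z*` of the objective is nonnegative. -/
theorem vade_normalizer_le_one
    {Z : Type*} [MeasurableSpace Z] (μ : Measure Z) [IsProbabilityMeasure μ]
    {C : Type*} [Fintype C] [Nonempty C]
    (p : Z → C → ℝ)
    (hpos : ∀ z c, 0 < p z c)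
    (hsum : ∀ z, ∑ c, p z c = 1)
    (hmeas : ∀ c, Measurable fun z => Real.log (p z c))
    (hint : ∀ c, Integrable (fun z => Real.log (p z c)) μ)
    (Zstar : ℝ) (hZstar : Zstar = ∑ c, Real.exp (∫ z, Real.log (p z c) ∂μ)) :
    Zstar ≤ 1 ∧ 0 ≤ - Real.log Zstar := by
  have hple : ∀ z c, p z c ≤ 1 := by
    intro z c
    have := Finset.single_le_sum (f := fun c => p z c)
      (fun i _ => (hpos z i).le) (Finset.mem_univ c)
    simpa [hsum z] using this
  have hpi : ∀ c, Integrable (fun z => p z c) μ := by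
    intro c
    refine Integrable.mono' (integrable_const 1) ?_ ?_
    · exact ((hmeas c).exp.aemeasurable.congr
        (by filter_upwards with z using Real.exp_log (hpos z c))).aestronglyMeasurable
    · filter_upwards with z
      rw [Real.norm_eq_abs, abs_of_pos (hpos z c)]; exact hple z c
  have hjensen : ∀ c, Real.exp (∫ z, Real.log (p z c) ∂μ) ≤ ∫ z, p z c ∂μ := by
    intro c
    have := (convexOn_exp).map_integral_le (μ := μ) (f := fun z => Real.log (p z c))
      Real.continuous_exp.continuousOn isClosed_univ
      (Filter.Eventually.of_forall fun _ => Set.mem_univ _) (hint c) ?_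
    · refine this.trans_eq ?_
      apply integral_congr_ae
      filter_upwards with z
      simp [Function.comp, Real.exp_log (hpos z c)]
    · refine ((hpi c).congr ?_)
      filter_upwards with z
      simp [Function.comp, Real.exp_log (hpos z c)]
  have hZle : Zstar ≤ 1 := by
    rw [hZstar]
    calc ∑ c, Real.exp (∫ z, Real.log (p z c) ∂μ) ≤ ∑ c, ∫ z, p z c ∂μ :=
          Finset.sum_le_sum fun c _ => hjensen c
      _ = ∫ z, ∑ c, p z c ∂μ := (integral_finset_sum _ fun c _ => hpi c).symm
      _ = 1 := by simp [hsum]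
  refine ⟨hZle, ?_⟩
  have hZpos : 0 < Zstar := hZstar ▸ Finset.sum_pos (fun c _ => Real.exp_pos _) Finset.univ_nonempty
  simpa using Real.log_nonpos hZpos.le hZle
end

section
/- Under the stated setup, Z* = 1 if and only if for every c ∈ C the function z ↦ p z c is μ-almost everywhere equal to a constant. Consequently, the minimum value −log Z* of the objective F over probability mass functions on C equals zero if and only if, for every c ∈ C, p(· , c) is μ-almost everywhere constant. -/
open MeasureTheory Real BigOperators

/-- `Z* = 1` iff each `p (·) c` is `μ`-a.e. constant; consequently the minimum value
`−log Z*` of the objective equals zero iff each `p (·) c` is `μ`-a.e. constant. -/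
theorem vade_normalizer_eq_one_iff
    {Z : Type*} [MeasurableSpace Z] (μ : Measure Z) [IsProbabilityMeasure μ]
    {C : Type*} [Fintype C] [Nonempty C]
    (p : Z → C → ℝ)
    (hpos : ∀ z c, 0 < p z c)
    (hsum : ∀ z, ∑ c, p z c = 1)
    (hmeas : ∀ c, Measurable fun z => Real.log (p z c))
    (hint : ∀ c, Integrable (fun z => Real.log (p z c)) μ)
    (Zstar : ℝ) (hZstar : Zstar = ∑ c, Real.exp (∫ z, Real.log (p z c) ∂μ)) :
    (Zstar = 1 ↔ ∀ c, ∃ a : ℝ, ∀ᵐ z ∂μ, p z c = a)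
    ∧ (- Real.log Zstar = 0 ↔ ∀ c, ∃ a : ℝ, ∀ᵐ z ∂μ, p z c = a) := by
  have hple1 : ∀ z c, p z c ≤ 1 := by
    intro z c
    calc p z c ≤ ∑ c', p z c' :=
          Finset.single_le_sum (fun c' _ => (hpos z c').le) (Finset.mem_univ c)
      _ = 1 := hsum z
  have hmp : ∀ c, Measurable fun z => p z c := by
    intro c
    have : (fun z => p z c) = fun z => Real.exp (Real.log (p z c)) := by
      funext z; rw [Real.exp_log (hpos z c)]
    rw [this]; exact (hmeas c).exp
  have hip : ∀ c, Integrable (fun z => p z c) μ := by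
    intro c
    refine Integrable.mono' (integrable_const 1) (hmp c).aestronglyMeasurable
      (Filter.Eventually.of_forall fun z => ?_)
    rw [Real.norm_eq_abs, abs_of_pos (hpos z c)]; exact hple1 z c
  have hsumint : (∑ c, ∫ z, p z c ∂μ) = 1 := by
    rw [← integral_finset_sum _ fun c _ => hip c]
    simp [hsum]
  -- Jensen: exp (∫ log p c) ≤ ∫ p c, with a.e.-const alternative
  have hjensen : ∀ c, ((fun z => Real.log (p z c)) =ᵐ[μ]
      Function.const Z (∫ z, Real.log (p z c) ∂μ)) ∨
      Real.exp (∫ z, Real.log (p z c) ∂μ) < ∫ z, p z c ∂μ := by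
    intro c
    have h := strictConvexOn_exp.ae_eq_const_or_map_average_lt
      continuous_exp.continuousOn isClosed_univ
      (Filter.Eventually.of_forall fun z => Set.mem_univ _) (hint c)
      (f := fun z => Real.log (p z c)) ?_
    · rcases h with h | h
      · left
        simpa [average_eq_integral] using h
      · right
        rw [average_eq_integral, average_eq_integral] at h
        refine h.trans_le (le_of_eq (integral_congr_ae ?_))
        exact Filter.Eventually.of_forall fun z => Real.exp_log (hpos z c)
    · have : (Real.exp ∘ fun z => Real.log (p z c)) = fun z => p z c := by
        funext z; simp [Real.exp_log (hpos z c)]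
      rw [this]; exact hip c
  have hle : ∀ c, Real.exp (∫ z, Real.log (p z c) ∂μ) ≤ ∫ z, p z c ∂μ := by
    intro c
    rcases hjensen c with h | h
    · have : ∫ z, p z c ∂μ = Real.exp (∫ z, Real.log (p z c) ∂μ) := by
        have heq : (fun z => p z c) =ᵐ[μ]
            fun _ => Real.exp (∫ z, Real.log (p z c) ∂μ) := by
          filter_upwards [h] with z hz
          rw [← Real.exp_log (hpos z c), hz]; rfl
        rw [integral_congr_ae heq, integral_const]; simp
      linarith
    · exact h.le
  have hmain : Zstar = 1 ↔ ∀ c, ∃ a : ℝ, ∀ᵐ z ∂μ, p z c = a := by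
    constructor
    · intro hZ1 c
      rcases hjensen c with h | h
      · refine ⟨Real.exp (∫ z, Real.log (p z c) ∂μ), ?_⟩
        filter_upwards [h] with z hz
        rw [← Real.exp_log (hpos z c), hz]; rfl
      · exfalso
        have : Zstar < ∑ c, ∫ z, p z c ∂μ := by
          rw [hZstar]
          exact Finset.sum_lt_sum (fun c' _ => hle c') ⟨c, Finset.mem_univ c, h⟩
        rw [hZ1, hsumint] at this
        exact lt_irrefl 1 this
    · intro hc
      choose a ha using hc
      have hap : ∀ c, 0 < a c := by
        intro c
        rcases (ha c).exists with ⟨z, hz⟩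
        rw [← hz]; exact hpos z c
      have hint' : ∀ c, ∫ z, Real.log (p z c) ∂μ = Real.log (a c) := by
        intro c
        have : (fun z => Real.log (p z c)) =ᵐ[μ] fun _ => Real.log (a c) := by
          filter_upwards [ha c] with z hz; rw [hz]
        rw [integral_congr_ae this]; simp
      have hsa : ∑ c, a c = 1 := by
        have hall : ∀ᵐ z ∂μ, ∀ c, p z c = a c :=
          (MeasureTheory.ae_all_iff).2 ha
        rcases hall.exists with ⟨z, hz⟩
        rw [← hsum z]
        exact Finset.sum_congr rfl fun c _ => (hz c).symm
      rw [hZstar, ← hsa]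
      exact Finset.sum_congr rfl fun c _ => by rw [hint' c, Real.exp_log (hap c)]
  refine ⟨hmain, ?_⟩
  have hZpos : 0 < Zstar := by
    rw [hZstar]
    exact Finset.sum_pos (fun c _ => Real.exp_pos _) Finset.univ_nonempty
  rw [← hmain, neg_eq_zero]
  constructor
  · intro h
    rcases Real.log_eq_zero.1 h with h | h | h
    · exact absurd h (ne_of_gt hZpos)
    · exact h
    · linarith
  · intro h; rw [h]; exact Real.log_one
end

section
/- (Correction of VaDE's misapprehension.) Under the stated setup, define q0 : C → ℝ by q0 c := ∫ p z c ∂μ(z). Then q0 is a probability mass function on C, the objective satisfies F(q0) = Σ_{c∈C} q0 c · (log(q0 c) − ∫ log(p z c) ∂μ(z)), and F(q0) ≥ 0, with F(q0) = 0 if and only if for every c ∈ C the function z ↦ p z c is μ-almost everywhere constant. Hence the choice q0(c) = E_{z∼μ}[p(c∣z)] does not in general make the expected KL term E_{z∼μ} KL[q0 ∥ p(·∣z)] equal to zero. -/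
open MeasureTheory Real BigOperators

/-- Correction of VaDE's misapprehension: `q0 c := ∫ p z c ∂μ` is a pmf,
`F(q0) = Σ_c q0 c (log (q0 c) − ∫ log (p z c) ∂μ)`, `F(q0) ≥ 0`, and `F(q0) = 0`
iff each `p (·) c` is `μ`-a.e. constant. -/
theorem vade_misapprehension_correction
    {Z : Type*} [MeasurableSpace Z] (μ : Measure Z) [IsProbabilityMeasure μ]
    {C : Type*} [Fintype C] [Nonempty C]
    (p : Z → C → ℝ)
    (hpos : ∀ z c, 0 < p z c)
    (hsum : ∀ z, ∑ c, p z c = 1)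
    (hmeas : ∀ c, Measurable fun z => Real.log (p z c))
    (hint : ∀ c, Integrable (fun z => Real.log (p z c)) μ)
    (q0 : C → ℝ) (hq0def : ∀ c, q0 c = ∫ z, p z c ∂μ) :
    ((∀ c, 0 ≤ q0 c) ∧ ∑ c, q0 c = 1)
    ∧ (∫ z, ∑ c, q0 c * (Real.log (q0 c) - Real.log (p z c)) ∂μ
        = ∑ c, q0 c * (Real.log (q0 c) - ∫ z, Real.log (p z c) ∂μ))
    ∧ (0 ≤ ∫ z, ∑ c, q0 c * (Real.log (q0 c) - Real.log (p z c)) ∂μ)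
    ∧ ((∫ z, ∑ c, q0 c * (Real.log (q0 c) - Real.log (p z c)) ∂μ = 0)
        ↔ ∀ c, ∃ a : ℝ, ∀ᵐ z ∂μ, p z c = a) := by
  -- measurability and integrability of `p (·) c`
  have pmeas : ∀ c, Measurable fun z => p z c := by
    intro c
    have : (fun z => p z c) = fun z => Real.exp (Real.log (p z c)) := by
      funext z; rw [Real.exp_log (hpos z c)]
    rw [this]; exact (hmeas c).exp
  have ple1 : ∀ z c, p z c ≤ 1 := by
    intro z c
    calc p z c ≤ ∑ c', p z c' :=
        Finset.single_le_sum (fun c' _ => (hpos z c').le) (Finset.mem_univ c)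
      _ = 1 := hsum z
  have pint : ∀ c, Integrable (fun z => p z c) μ := by
    intro c
    refine Integrable.mono' (integrable_const 1) (pmeas c).aestronglyMeasurable ?_
    filter_upwards with z
    rw [Real.norm_eq_abs, abs_of_pos (hpos z c)]
    exact ple1 z c
  have hq0pos : ∀ c, 0 < q0 c := by
    intro c
    rw [hq0def c,
      integral_pos_iff_support_of_nonneg (fun z => (hpos z c).le) (pint c)]
    have : Function.support (fun z => p z c) = Set.univ := by
      ext z; simp [(hpos z c).ne']
    rw [this]
    simp
  -- part 1
  have part1 : (∀ c, 0 ≤ q0 c) ∧ ∑ c, q0 c = 1 := by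
    constructor
    · exact fun c => (hq0pos c).le
    · have : ∑ c, q0 c = ∫ z, (∑ c, p z c) ∂μ := by
        rw [integral_finset_sum _ (fun c _ => pint c)]
        exact Finset.sum_congr rfl fun c _ => hq0def c
      rw [this]
      simp [hsum]
  -- integrability of each summand
  have sint : ∀ c, Integrable
      (fun z => q0 c * (Real.log (q0 c) - Real.log (p z c))) μ := by
    intro c
    exact (((integrable_const (Real.log (q0 c))).sub (hint c)).const_mul _)
  -- part 2
  have part2 : ∫ z, ∑ c, q0 c * (Real.log (q0 c) - Real.log (p z c)) ∂μ
      = ∑ c, q0 c * (Real.log (q0 c) - ∫ z, Real.log (p z c) ∂μ) := by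
    rw [integral_finset_sum _ (fun c _ => sint c)]
    refine Finset.sum_congr rfl fun c _ => ?_
    rw [integral_const_mul, integral_sub (integrable_const _) (hint c)]
    simp
  -- the key per-class inequality and equality case
  have key : ∀ c, (∫ z, Real.log (p z c) ∂μ ≤ Real.log (q0 c)) ∧
      ((∫ z, Real.log (p z c) ∂μ = Real.log (q0 c)) ↔
        ∀ᵐ z ∂μ, p z c = q0 c) := by
    intro c
    set I := ∫ z, Real.log (p z c) ∂μ with hI
    have hq := hq0pos c
    set h : Z → ℝ := fun z => p z c / q0 c - 1 - (Real.log (p z c) - Real.log (q0 c))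
      with hh
    have hdivpos : ∀ z, 0 < p z c / q0 c := fun z => div_pos (hpos z c) hq
    have hnn : ∀ z, 0 ≤ h z := by
      intro z
      have := Real.log_le_sub_one_of_pos (hdivpos z)
      rw [Real.log_div (hpos z c).ne' hq.ne'] at this
      simp only [hh]
      linarith
    have hintg : Integrable h μ := by
      apply Integrable.sub
      · exact ((pint c).div_const _).sub (integrable_const 1)
      · exact (hint c).sub (integrable_const _)
    have i1 : Integrable (fun z => p z c / q0 c - 1) μ := by
      exact ((pint c).div_const _).sub (integrable_const 1)
    have i2 : Integrable (fun z => Real.log (p z c) - Real.log (q0 c)) μ := by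
      exact (hint c).sub (integrable_const _)
    have hintval : ∫ z, h z ∂μ = Real.log (q0 c) - I := by
      have e1 : ∫ z, h z ∂μ = (∫ z, (p z c / q0 c - 1) ∂μ)
          - ∫ z, (Real.log (p z c) - Real.log (q0 c)) ∂μ := integral_sub i1 i2
      have e2 : ∫ z, (p z c / q0 c - 1) ∂μ = 0 := by
        rw [integral_sub ((pint c).div_const _) (integrable_const 1),
          integral_div, ← hq0def c]
        simp [div_self hq.ne']
      have e3 : ∫ z, (Real.log (p z c) - Real.log (q0 c)) ∂μ
          = I - Real.log (q0 c) := by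
        rw [integral_sub (hint c) (integrable_const _)]
        simp [← hI]
      rw [e1, e2, e3]; ring
    constructor
    · have : (0:ℝ) ≤ ∫ z, h z ∂μ := integral_nonneg hnn
      rw [hintval] at this; linarith
    · constructor
      · intro hEq
        have hzero : ∫ z, h z ∂μ = 0 := by rw [hintval, hEq]; ring
        have hae := (integral_eq_zero_iff_of_nonneg hnn hintg).mp hzero
        filter_upwards [hae] with z hz
        simp only [Pi.zero_apply] at hz
        by_contra hne
        have hne1 : p z c / q0 c ≠ 1 := by
          intro h1
          exact hne (by field_simp at h1; linarith)
        have hlt := Real.log_lt_sub_one_of_pos (hdivpos z) hne1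
        rw [Real.log_div (hpos z c).ne' hq.ne'] at hlt
        simp only [hh] at hz
        linarith
      · intro hae
        have : (fun z => Real.log (p z c)) =ᵐ[μ]
            (fun _ => Real.log (q0 c)) := by
          filter_upwards [hae] with z hz
          rw [hz]
        rw [hI, integral_congr_ae this]
        simp
  -- part 3
  have part3 : 0 ≤ ∫ z, ∑ c, q0 c * (Real.log (q0 c) - Real.log (p z c)) ∂μ := by
    rw [part2]
    refine Finset.sum_nonneg fun c _ => ?_
    have := (key c).1
    have hq := hq0pos c
    nlinarith
  refine ⟨part1, part2, part3, ?_⟩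
  constructor
  · intro hzero c
    rw [part2] at hzero
    have hterm : q0 c * (Real.log (q0 c) - ∫ z, Real.log (p z c) ∂μ) = 0 := by
      have := (Finset.sum_eq_zero_iff_of_nonneg
        (fun c (_ : c ∈ Finset.univ) => by
          have := (key c).1; have hq := hq0pos c; nlinarith)).mp hzero c
        (Finset.mem_univ c)
      exact this
    have hq := hq0pos c
    have : Real.log (q0 c) - ∫ z, Real.log (p z c) ∂μ = 0 := by
      rcases mul_eq_zero.mp hterm with h | h
      · exact absurd h hq.ne'
      · exact h
    exact ⟨q0 c, ((key c).2).mp (by linarith)⟩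
  · intro hconst
    rw [part2]
    refine Finset.sum_eq_zero fun c _ => ?_
    obtain ⟨a, ha⟩ := hconst c
    have hq0a : q0 c = a := by
      rw [hq0def c, integral_congr_ae (by filter_upwards [ha] with z hz using hz)]
      simp
    have : ∫ z, Real.log (p z c) ∂μ = Real.log (q0 c) := by
      apply ((key c).2).mpr
      filter_upwards [ha] with z hz
      rw [hz, hq0a]
    rw [this]; ring
end

section
/- (Multi-Facet VaDE Trick for factorized posterior and prior.) Under the stated multi-facet setup, the function c ↦ Π_{j=1}^J π_j (c_j) is a probability mass function on Π_j C_j, and for every probability mass function q on Π_j C_j one has F(q) ≥ −Σ_{j=1}^J log Z_j*, with equality if and only if q c = Π_{j=1}^J π_j (c_j) for all c. In other words, the unique minimizer over pmfs q of the expected KL divergence E_{z∼μ} KL[q ∥ P(·∣z)] is the product of the per-facet softmax pmfs, and the minimum value attained is −Σ_{j=1}^J log Z_j*. -/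
open MeasureTheory Real BigOperators

/-- Gibbs' inequality on a finite type, with equality case. -/
lemma gibbs_aux_s5 {D : Type*} [Fintype D] (q w : D → ℝ)
    (hq0 : ∀ c, 0 ≤ q c) (hq1 : ∑ c, q c = 1)
    (hw0 : ∀ c, 0 < w c) (hw1 : ∑ c, w c = 1) :
    (0 ≤ ∑ c, q c * (Real.log (q c) - Real.log (w c))) ∧
    ((∑ c, q c * (Real.log (q c) - Real.log (w c)) = 0) ↔ ∀ c, q c = w c) := by
  set T : D → ℝ := fun c => (w c - q c) - q c * (Real.log (w c) - Real.log (q c)) with hT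
  have hTnn : ∀ c, 0 ≤ T c := by
    intro c
    rcases eq_or_lt_of_le (hq0 c) with h | h
    · simp [hT, ← h, (hw0 c).le]
    · have hlog : Real.log (w c / q c) ≤ w c / q c - 1 :=
        Real.log_le_sub_one_of_pos (div_pos (hw0 c) h)
      rw [Real.log_div (hw0 c).ne' h.ne'] at hlog
      have := mul_le_mul_of_nonneg_left hlog (hq0 c)
      have h2 : q c * (w c / q c - 1) = w c - q c := by field_simp
      simp only [hT]
      nlinarith
  have hTsum : ∑ c, T c = ∑ c, q c * (Real.log (q c) - Real.log (w c)) := by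
    simp only [hT]
    rw [Finset.sum_sub_distrib, Finset.sum_sub_distrib, hq1, hw1]
    ring_nf
    rw [← Finset.sum_neg_distrib]
    exact Finset.sum_congr rfl fun c _ => by ring
  constructor
  · rw [← hTsum]; exact Finset.sum_nonneg fun c _ => hTnn c
  constructor
  · intro h
    rw [← hTsum] at h
    have hz := (Finset.sum_eq_zero_iff_of_nonneg (fun c _ => hTnn c)).mp h
    intro c
    have hc : T c = 0 := hz c (Finset.mem_univ c)
    rcases eq_or_lt_of_le (hq0 c) with h' | h'
    · exfalso
      have : w c = 0 := by simp [hT, ← h'] at hc; linarith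
      exact (hw0 c).ne' this
    · by_contra hne
      have hne' : w c / q c ≠ 1 := by
        intro h1
        exact hne ((div_eq_one_iff_eq h'.ne').mp h1).symm
      have hlog : Real.log (w c / q c) < w c / q c - 1 :=
        Real.log_lt_sub_one_of_pos (div_pos (hw0 c) h') hne'
      rw [Real.log_div (hw0 c).ne' h'.ne'] at hlog
      have := mul_lt_mul_of_pos_left hlog h'
      have h2 : q c * (w c / q c - 1) = w c - q c := by field_simp
      simp only [hT] at hc
      nlinarith
  · intro h
    have : ∀ c ∈ Finset.univ, q c * (Real.log (q c) - Real.log (w c)) = 0 := by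
      intro c _; rw [h c]; ring_nf
    exact Finset.sum_eq_zero this

lemma measurePreserving_eval_pi {ι : Type*} [Fintype ι] {α : ι → Type*}
    [∀ i, MeasurableSpace (α i)] (μ : ∀ i, Measure (α i)) [∀ i, IsProbabilityMeasure (μ i)]
    (j : ι) : MeasurePreserving (fun z : ∀ i, α i => z j) (Measure.pi μ) (μ j) := by
  classical
  refine ⟨measurable_pi_apply j, ?_⟩
  ext s hs
  rw [Measure.map_apply (measurable_pi_apply j) hs]
  have : (fun z : ∀ i, α i => z j) ⁻¹' s
      = Set.pi Set.univ (Function.update (fun _ => Set.univ) j s) :=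
    Set.eval_preimage
  rw [this, Measure.pi_pi]
  rw [Finset.prod_eq_single j (fun i _ hij => by simp [Function.update_of_ne hij])
    (fun h => absurd (Finset.mem_univ j) h)]
  simp

/-- Multi-Facet VaDE Trick for factorized posterior and prior: the product of the
per-facet softmax pmfs is a pmf on `Π j, C j`, and it is the unique minimizer of the
expected KL objective, with minimum value `−Σ_j log Z_j*`. -/
theorem multi_facet_vade_trick_factorized
    {J : ℕ} (hJ : 1 ≤ J)
    {Z : Fin J → Type*} [∀ j, MeasurableSpace (Z j)]
    (μ : ∀ j, Measure (Z j)) [∀ j, IsProbabilityMeasure (μ j)]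
    {C : Fin J → Type*} [∀ j, Fintype (C j)] [∀ j, Nonempty (C j)]
    (p : ∀ j, Z j → C j → ℝ)
    (hpos : ∀ j (z : Z j) (c : C j), 0 < p j z c)
    (hsum : ∀ j (z : Z j), ∑ c, p j z c = 1)
    (hmeas : ∀ j (c : C j), Measurable fun z => Real.log (p j z c))
    (hint : ∀ j (c : C j), Integrable (fun z => Real.log (p j z c)) (μ j))
    (Zstar : Fin J → ℝ)
    (hZstar : ∀ j, Zstar j = ∑ c, Real.exp (∫ z, Real.log (p j z c) ∂(μ j)))
    (smx : ∀ j, C j → ℝ)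
    (hsmx : ∀ j (c : C j), smx j c = Real.exp (∫ z, Real.log (p j z c) ∂(μ j)) / Zstar j) :
    ((∀ c : ∀ j, C j, 0 ≤ ∏ j, smx j (c j)) ∧ (∑ c : ∀ j, C j, ∏ j, smx j (c j)) = 1)
    ∧ (∀ q : (∀ j, C j) → ℝ, (∀ c, 0 ≤ q c) → (∑ c, q c) = 1 →
        (-(∑ j, Real.log (Zstar j)) ≤
          ∫ z, ∑ c, q c * (Real.log (q c) - Real.log (∏ j, p j (z j) (c j)))
            ∂(Measure.pi μ))
        ∧ ((∫ z, ∑ c, q c * (Real.log (q c) - Real.log (∏ j, p j (z j) (c j)))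
              ∂(Measure.pi μ) = -(∑ j, Real.log (Zstar j)))
            ↔ ∀ c, q c = ∏ j, smx j (c j))) := by
  classical
  set I : ∀ j, C j → ℝ := fun j c => ∫ z, Real.log (p j z c) ∂(μ j) with hI
  have hZpos : ∀ j, 0 < Zstar j := fun j => by
    rw [hZstar]
    exact Finset.sum_pos (fun c _ => Real.exp_pos _) Finset.univ_nonempty
  have hsmxpos : ∀ j (c : C j), 0 < smx j c := fun j c => by
    rw [hsmx]; exact div_pos (Real.exp_pos _) (hZpos j)
  have hsmxsum : ∀ j, ∑ c, smx j c = 1 := fun j => by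
    simp only [hsmx, ← Finset.sum_div, ← hZstar]
    exact div_self (hZpos j).ne'
  have hπpos : ∀ c : ∀ j, C j, 0 < ∏ j, smx j (c j) := fun c =>
    Finset.prod_pos fun j _ => hsmxpos j (c j)
  have hπsum : (∑ c : ∀ j, C j, ∏ j, smx j (c j)) = 1 := by
    rw [← Fintype.prod_sum smx]
    exact Finset.prod_eq_one fun j _ => hsmxsum j
  refine ⟨⟨fun c => (hπpos c).le, hπsum⟩, ?_⟩
  intro q hq0 hq1
  -- measure preserving evaluations
  have hev : ∀ j, MeasurePreserving (fun z : ∀ j, Z j => z j) (Measure.pi μ) (μ j) :=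
    fun j => measurePreserving_eval_pi μ j
  have hIntLog : ∀ j (c : C j),
      Integrable (fun z : ∀ j, Z j => Real.log (p j (z j) c)) (Measure.pi μ) := by
    intro j c
    have h1 : Integrable (fun z => Real.log (p j z c))
        (Measure.map (fun z : ∀ j, Z j => z j) (Measure.pi μ)) := by
      rw [(hev j).map_eq]; exact hint j c
    exact ((integrable_map_measure (hmeas j c).aestronglyMeasurable
      (measurable_pi_apply j).aemeasurable).mp h1)
  have hIntEq : ∀ j (c : C j),
      (∫ z, Real.log (p j (z j) c) ∂(Measure.pi μ)) = I j c := by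
    intro j c
    have := integral_map (μ := Measure.pi μ) (φ := fun z : ∀ j, Z j => z j)
      (measurable_pi_apply j).aemeasurable
      (f := fun y => Real.log (p j y c))
      (by rw [(hev j).map_eq]; exact (hmeas j c).aestronglyMeasurable)
    rw [(hev j).map_eq] at this
    exact this.symm
  -- rewrite integrand: log of product = sum of logs
  have hrw : (fun z : ∀ j, Z j => ∑ c : ∀ j, C j,
        q c * (Real.log (q c) - Real.log (∏ j, p j (z j) (c j))))
      = fun z => ∑ c : ∀ j, C j,
        q c * (Real.log (q c) - ∑ j, Real.log (p j (z j) (c j))) := by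
    funext z
    refine Finset.sum_congr rfl fun c _ => ?_
    rw [Real.log_prod fun j _ => (hpos j (z j) (c j)).ne']
  have hIntTerm : ∀ c : ∀ j, C j, Integrable
      (fun z : ∀ j, Z j => q c * (Real.log (q c) - ∑ j, Real.log (p j (z j) (c j))))
      (Measure.pi μ) := by
    intro c
    exact (((integrable_const (Real.log (q c))).sub
      (integrable_finset_sum _ fun j _ => hIntLog j (c j))).const_mul (q c))
  have hF : (∫ z, ∑ c : ∀ j, C j,
        q c * (Real.log (q c) - Real.log (∏ j, p j (z j) (c j))) ∂(Measure.pi μ))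
      = ∑ c : ∀ j, C j, q c * (Real.log (q c) - ∑ j, I j (c j)) := by
    rw [hrw, integral_finset_sum _ fun c _ => hIntTerm c]
    refine Finset.sum_congr rfl fun c _ => ?_
    rw [integral_const_mul, integral_sub (integrable_const _)
      (integrable_finset_sum _ fun j _ => hIntLog j (c j)),
      integral_const, integral_finset_sum _ fun j _ => hIntLog j (c j)]
    simp [hIntEq]
  -- log of the product pmf
  have hlogπ : ∀ c : ∀ j, C j,
      Real.log (∏ j, smx j (c j)) = (∑ j, I j (c j)) - ∑ j, Real.log (Zstar j) := by
    intro c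
    rw [Real.log_prod fun j _ => (hsmxpos j (c j)).ne', ← Finset.sum_sub_distrib]
    refine Finset.sum_congr rfl fun j _ => ?_
    rw [hsmx, Real.log_div (Real.exp_pos _).ne' (hZpos j).ne', Real.log_exp]
  have hFsplit : ∑ c : ∀ j, C j, q c * (Real.log (q c) - ∑ j, I j (c j))
      = (∑ c : ∀ j, C j, q c * (Real.log (q c) - Real.log (∏ j, smx j (c j))))
        - ∑ j, Real.log (Zstar j) := by
    have hterm : ∀ c : ∀ j, C j, q c * (Real.log (q c) - ∑ j, I j (c j))
        = q c * (Real.log (q c) - Real.log (∏ j, smx j (c j)))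
          - q c * (∑ j, Real.log (Zstar j)) := by
      intro c; rw [hlogπ c]; ring
    rw [Finset.sum_congr rfl fun c _ => hterm c, Finset.sum_sub_distrib,
      ← Finset.sum_mul, hq1, one_mul]
  obtain ⟨hG0, hGiff⟩ := gibbs_aux_s5 q (fun c => ∏ j, smx j (c j)) hq0 hq1 hπpos hπsum
  rw [hF, hFsplit]
  constructor
  · linarith
  · rw [sub_eq_neg_self]
    exact hGiff
end

section
/- Under the stated multi-facet setup, for every j one has Z_j* ≤ 1; consequently the minimum value −Σ_{j=1}^J log Z_j* of the objective F over probability mass functions on Π_j C_j is nonnegative, and it equals zero if and only if for every j and every c_j ∈ C_j the function z_j ↦ p_j z_j c_j is μ_j-almost everywhere constant. -/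
open MeasureTheory Real BigOperators

lemma jensen_exp_key {α : Type*} [MeasurableSpace α] {μ : Measure α} [IsProbabilityMeasure μ]
    (p : α → ℝ) (hpos : ∀ x, 0 < p x) (hle : ∀ x, p x ≤ 1)
    (hm : Measurable fun x => Real.log (p x))
    (hi : Integrable (fun x => Real.log (p x)) μ) :
    Real.exp (∫ x, Real.log (p x) ∂μ) ≤ ∫ x, p x ∂μ ∧
    (Real.exp (∫ x, Real.log (p x) ∂μ) = ∫ x, p x ∂μ ↔ ∃ a, ∀ᵐ x ∂μ, p x = a) := by
  have heq : (Real.exp ∘ fun x => Real.log (p x)) = p :=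
    funext fun x => Real.exp_log (hpos x)
  have hpm : Measurable p := by
    rw [← heq]; exact Real.measurable_exp.comp hm
  have hpi : Integrable p μ := by
    refine (integrable_const (1 : ℝ)).mono' hpm.aestronglyMeasurable ?_
    filter_upwards with x
    rw [Real.norm_eq_abs, abs_of_pos (hpos x)]; exact hle x
  have hgi : Integrable (Real.exp ∘ fun x => Real.log (p x)) μ := by rw [heq]; exact hpi
  have hJ := strictConvexOn_exp.ae_eq_const_or_map_average_lt continuous_exp.continuousOn
    isClosed_univ (Filter.Eventually.of_forall fun x => Set.mem_univ _) hi hgi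
  rw [average_eq_integral, average_eq_integral] at hJ
  have hInt : ∫ x, Real.exp (Real.log (p x)) ∂μ = ∫ x, p x ∂μ := by
    refine integral_congr_ae (Filter.Eventually.of_forall fun x => ?_)
    exact Real.exp_log (hpos x)
  rcases hJ with hconst | hlt
  · -- log p is a.e. constant
    have hpc : ∀ᵐ x ∂μ, p x = Real.exp (∫ y, Real.log (p y) ∂μ) := by
      filter_upwards [hconst] with x hx
      rw [← Real.exp_log (hpos x), hx]; rfl
    have hEq : Real.exp (∫ x, Real.log (p x) ∂μ) = ∫ x, p x ∂μ := by
      rw [integral_congr_ae hpc, integral_const]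
      simp
    exact ⟨hEq.le, by simp [hEq, eq_self_iff_true, true_iff]; exact ⟨_, hpc⟩⟩
  · rw [hInt] at hlt
    refine ⟨hlt.le, ⟨fun h => absurd h hlt.ne, fun ⟨a, ha⟩ => ?_⟩⟩
    -- derive contradiction with strict inequality
    exfalso
    have hane : a > 0 := by
      have : ∃ x, p x = a := (ha.exists)
      obtain ⟨x, hx⟩ := this
      rw [← hx]; exact hpos x
    have h1 : ∫ x, Real.log (p x) ∂μ = Real.log a := by
      rw [integral_congr_ae (ha.mono fun x hx => by rw [hx]), integral_const]; simp
    have h2 : ∫ x, p x ∂μ = a := by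
      rw [integral_congr_ae ha, integral_const]; simp
    rw [h1, h2, Real.exp_log hane] at hlt
    exact lt_irrefl _ hlt

/-- For every facet `j`, `Z_j* ≤ 1`; hence the minimum `−Σ_j log Z_j*` of the objective
is nonnegative, and it is zero iff every `p j (·) c` is `μ j`-a.e. constant. -/
theorem multi_facet_normalizers_le_one
    {J : ℕ} (hJ : 1 ≤ J)
    {Z : Fin J → Type*} [∀ j, MeasurableSpace (Z j)]
    (μ : ∀ j, Measure (Z j)) [∀ j, IsProbabilityMeasure (μ j)]
    {C : Fin J → Type*} [∀ j, Fintype (C j)] [∀ j, Nonempty (C j)]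
    (p : ∀ j, Z j → C j → ℝ)
    (hpos : ∀ j (z : Z j) (c : C j), 0 < p j z c)
    (hsum : ∀ j (z : Z j), ∑ c, p j z c = 1)
    (hmeas : ∀ j (c : C j), Measurable fun z => Real.log (p j z c))
    (hint : ∀ j (c : C j), Integrable (fun z => Real.log (p j z c)) (μ j))
    (Zstar : Fin J → ℝ)
    (hZstar : ∀ j, Zstar j = ∑ c, Real.exp (∫ z, Real.log (p j z c) ∂(μ j))) :
    (∀ j, Zstar j ≤ 1)
    ∧ (0 ≤ -(∑ j, Real.log (Zstar j)))
    ∧ ((-(∑ j, Real.log (Zstar j)) = 0)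
        ↔ ∀ j (c : C j), ∃ a : ℝ, ∀ᵐ z ∂(μ j), p j z c = a) := by
  have hle1 : ∀ j (z : Z j) (c : C j), p j z c ≤ 1 := by
    intro j z c
    calc p j z c ≤ ∑ c', p j z c' :=
          Finset.single_le_sum (fun c' _ => (hpos j z c').le) (Finset.mem_univ c)
      _ = 1 := hsum j z
  have key : ∀ j (c : C j),
      Real.exp (∫ z, Real.log (p j z c) ∂(μ j)) ≤ ∫ z, p j z c ∂(μ j) ∧
      (Real.exp (∫ z, Real.log (p j z c) ∂(μ j)) = ∫ z, p j z c ∂(μ j) ↔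
        ∃ a, ∀ᵐ z ∂(μ j), p j z c = a) :=
    fun j c => jensen_exp_key (fun z => p j z c) (fun z => hpos j z c)
      (fun z => hle1 j z c) (hmeas j c) (hint j c)
  have hpInt : ∀ j (c : C j), Integrable (fun z => p j z c) (μ j) := by
    intro j c
    have heq : (Real.exp ∘ fun z => Real.log (p j z c)) = fun z => p j z c :=
      funext fun z => Real.exp_log (hpos j z c)
    have hpm : Measurable fun z => p j z c := by
      rw [← heq]; exact Real.measurable_exp.comp (hmeas j c)
    refine (integrable_const (1 : ℝ)).mono' hpm.aestronglyMeasurable ?_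
    filter_upwards with z
    rw [Real.norm_eq_abs, abs_of_pos (hpos j z c)]; exact hle1 j z c
  have hAsum : ∀ j, ∑ c, ∫ z, p j z c ∂(μ j) = 1 := by
    intro j
    rw [← integral_finset_sum _ (fun c _ => hpInt j c)]
    simp [hsum j]
  have hZle : ∀ j, Zstar j ≤ 1 := by
    intro j
    rw [hZstar j, ← hAsum j]
    exact Finset.sum_le_sum fun c _ => (key j c).1
  have hZpos : ∀ j, 0 < Zstar j := by
    intro j
    rw [hZstar j]
    exact Finset.sum_pos (fun c _ => Real.exp_pos _) Finset.univ_nonempty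
  have hlog : ∀ j, Real.log (Zstar j) ≤ 0 := fun j =>
    Real.log_nonpos (hZpos j).le (hZle j)
  have hZiff : ∀ j, Zstar j = 1 ↔ ∀ c : C j, ∃ a, ∀ᵐ z ∂(μ j), p j z c = a := by
    intro j
    constructor
    · intro h1 c
      have hsumeq : ∑ c, Real.exp (∫ z, Real.log (p j z c) ∂(μ j)) =
          ∑ c, ∫ z, p j z c ∂(μ j) := by
        rw [← hZstar j, h1, hAsum j]
      have := (Finset.sum_eq_sum_iff_of_le (fun c _ => (key j c).1)).1 hsumeq c
        (Finset.mem_univ c)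
      exact (key j c).2.1 this
    · intro h
      have : ∀ c : C j, Real.exp (∫ z, Real.log (p j z c) ∂(μ j)) =
          ∫ z, p j z c ∂(μ j) := fun c => (key j c).2.2 (h c)
      rw [hZstar j]
      simp_rw [this]
      exact hAsum j
  refine ⟨hZle, ?_, ?_⟩
  · simp only [Left.nonneg_neg_iff]
    exact Finset.sum_nonpos fun j _ => hlog j
  · rw [neg_eq_zero, Finset.sum_eq_zero_iff_of_nonpos fun j _ => hlog j]
    constructor
    · intro h j c
      have := h j (Finset.mem_univ j)
      rcases Real.log_eq_zero.1 this with h0 | h1 | hm1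
      · exact absurd h0 (hZpos j).ne'
      · exact (hZiff j).1 h1 c
      · linarith [hZpos j]
    · intro h j _
      rw [(hZiff j).2 (h j), Real.log_one]
end
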